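/- Let A be an n×n real matrix with eigenvector-eigenvalue pairs (λ₁,v₁),...,(λₙ,vₙ) where λ₁ > λ₂ ≥ ... ≥ λₙ > 0 and v₁ a unit eigenvector. Define d(x,y) = ‖x/⟨x,v₁⟩ − y/⟨y,v₁⟩‖₂ on vectors not perpendicular to v₁. Then the power iteration map f(x) = Ax/‖Ax‖₂ satisfies d(f(x),f(y)) ≤ (λ₂/λ₁)·d(x,y) for all x,y with ⟨x,v₁⟩ ≠ 0 and ⟨y,v₁⟩ ≠ 0. -/

import Mathlib

open scoped RealInnerProductSpace

/-- Power iteration is a contraction with rate λ₂/λ₁ under the metric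
    d(x,y) = ‖x/⟨x,v₁⟩ − y/⟨y,v₁⟩‖₂. -/
theorem stmt_0 (n : ℕ) (T : EuclideanSpace ℝ (Fin (n + 2)) →ₗ[ℝ] EuclideanSpace ℝ (Fin (n + 2)))
    (lam : Fin (n + 2) → ℝ) (v : Fin (n + 2) → EuclideanSpace ℝ (Fin (n + 2)))
    (hv : Orthonormal ℝ v) (hspan : Submodule.span ℝ (Set.range v) = ⊤)
    (heig : ∀ i, T (v i) = lam i • v i)
    (hgap : lam 1 < lam 0)
    (hmono : ∀ i j : Fin (n + 2), i ≤ j → lam j ≤ lam i)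
    (hpos : ∀ i, 0 < lam i)
    (f : EuclideanSpace ℝ (Fin (n + 2)) → EuclideanSpace ℝ (Fin (n + 2)))
    (hf : ∀ x, f x = (‖T x‖)⁻¹ • T x)
    (d : EuclideanSpace ℝ (Fin (n + 2)) → EuclideanSpace ℝ (Fin (n + 2)) → ℝ)
    (hd : ∀ x y, d x y = ‖(⟪x, v 0⟫)⁻¹ • x - (⟪y, v 0⟫)⁻¹ • y‖) :
    ∀ x y, ⟪x, v 0⟫ ≠ 0 → ⟪y, v 0⟫ ≠ 0 →
      d (f x) (f y) ≤ (lam 1 / lam 0) * d x y := by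
  classical
  have hsp : ⊤ ≤ Submodule.span ℝ (Set.range v) := hspan.ge
  set b : OrthonormalBasis (Fin (n+2)) ℝ (EuclideanSpace ℝ (Fin (n+2))) :=
    OrthonormalBasis.mk hv hsp with hbdef
  have hb : ∀ i, b i = v i := fun i => by rw [hbdef]; simp
  have hrx : ∀ (x : EuclideanSpace ℝ (Fin (n+2))) i, ⟪x, v i⟫ = b.repr x i := by
    intro x i
    rw [← hb, real_inner_comm]
    exact (b.repr_apply_apply x i).symm
  have hite := orthonormal_iff_ite.mp hv
  have hrepr : ∀ (x : EuclideanSpace ℝ (Fin (n+2))) i, b.repr (T x) i = lam i * b.repr x i := by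
    intro x i
    rw [← hrx]
    conv_lhs => rw [← b.sum_repr x]
    rw [map_sum, sum_inner]
    simp only [map_smul, hb, heig, smul_smul, real_inner_smul_left, hite, mul_ite, mul_one,
      mul_zero, Finset.sum_ite_eq', Finset.mem_univ, if_true]
    ring
  -- norm via coordinates
  have hnorm : ∀ z : EuclideanSpace ℝ (Fin (n+2)), ‖z‖ = Real.sqrt (∑ i, (b.repr z i)^2) := by
    intro z
    rw [← b.repr.norm_map z, EuclideanSpace.norm_eq]
    simp [Real.norm_eq_abs, sq_abs]
  -- contraction on the complement of v 0
  have hC : ∀ w : EuclideanSpace ℝ (Fin (n+2)), b.repr w 0 = 0 → ‖T w‖ ≤ lam 1 * ‖w‖ := by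
    intro w hw
    rw [hnorm (T w), hnorm w]
    have key : ∑ i, (b.repr (T w) i)^2 ≤ (lam 1)^2 * ∑ i, (b.repr w i)^2 := by
      rw [Finset.mul_sum]
      apply Finset.sum_le_sum
      intro i _
      rw [hrepr]
      by_cases h0 : i = 0
      · subst h0; rw [hw]; simp
      · have h1i : lam i ≤ lam 1 := by
          apply hmono
          have hi : (i : ℕ) ≠ 0 := by
            intro h; apply h0; exact Fin.ext (by rw [h, Fin.val_zero])
          rw [Fin.le_def, Fin.val_one]
          omega
        have hip := hpos i
        rw [mul_pow]
        exact mul_le_mul_of_nonneg_right (pow_le_pow_left₀ hip.le h1i 2) (sq_nonneg _)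
    calc Real.sqrt (∑ i, (b.repr (T w) i)^2)
        ≤ Real.sqrt ((lam 1)^2 * ∑ i, (b.repr w i)^2) := Real.sqrt_le_sqrt key
      _ = lam 1 * Real.sqrt (∑ i, (b.repr w i)^2) := by
          rw [Real.sqrt_mul (sq_nonneg _), Real.sqrt_sq (hpos 1).le]
  intro x y hx hy
  have hx0 : b.repr x 0 ≠ 0 := by rwa [← hrx]
  have hy0 : b.repr y 0 ≠ 0 := by rwa [← hrx]
  have hTne : ∀ z : EuclideanSpace ℝ (Fin (n+2)), b.repr z 0 ≠ 0 → ‖T z‖ ≠ 0 := by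
    intro z hz hn
    have hz2 : T z = 0 := norm_eq_zero.mp hn
    have := hrepr z 0
    rw [hz2] at this
    simp only [map_zero] at this
    exact hz (by
      rcases mul_eq_zero.mp this.symm with h | h
      · exact absurd h (hpos 0).ne'
      · exact h)
  have key : ∀ z : EuclideanSpace ℝ (Fin (n+2)), b.repr z 0 ≠ 0 →
      (⟪f z, v 0⟫)⁻¹ • f z = (lam 0 * ⟪z, v 0⟫)⁻¹ • T z := by
    intro z hz
    have hc : ‖T z‖ ≠ 0 := hTne z hz
    rw [hf, real_inner_smul_left, smul_smul, hrx, hrepr, hrx]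
    congr 1
    rw [mul_inv_rev, inv_inv, mul_assoc, mul_inv_cancel₀ hc, mul_one]
  set u : EuclideanSpace ℝ (Fin (n+2)) := (⟪x, v 0⟫)⁻¹ • x - (⟪y, v 0⟫)⁻¹ • y with hu
  have hu0 : b.repr u 0 = 0 := by
    have : b.repr u = (⟪x, v 0⟫)⁻¹ • b.repr x - (⟪y, v 0⟫)⁻¹ • b.repr y := by
      rw [hu]; simp
    rw [this]
    simp only [PiLp.sub_apply, PiLp.smul_apply, smul_eq_mul]
    rw [hrx x 0, hrx y 0] at *
    rw [inv_mul_cancel₀ hx0, inv_mul_cancel₀ hy0, sub_self]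
  have hTu : (lam 0 * ⟪x, v 0⟫)⁻¹ • T x - (lam 0 * ⟪y, v 0⟫)⁻¹ • T y = (lam 0)⁻¹ • T u := by
    rw [hu, map_sub, map_smul, map_smul, smul_sub, smul_smul, smul_smul, mul_inv, mul_inv]
  rw [hd, key x hx0, key y hy0, hTu, norm_smul, Real.norm_eq_abs,
    abs_of_pos (inv_pos.mpr (hpos 0)), hd]
  calc (lam 0)⁻¹ * ‖T u‖ ≤ (lam 0)⁻¹ * (lam 1 * ‖u‖) := by
        exact mul_le_mul_of_nonneg_left (hC u hu0) (inv_pos.mpr (hpos 0)).le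
    _ = lam 1 / lam 0 * ‖u‖ := by ring
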